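/- With ν(k, n, r) the coefficient of x^{n−k−1} y^{k−1} in (x+y)^r (x²+y²)^{(n−2−r)/2}, one has the bounds C(⌊(n−2)/2⌋; ⌊(k−1)/2⌋, ⌊(n−k−1)/2⌋) ≤ ν(k, n, r) ≤ C(n−2, k−1) for all admissible r. -/

import Mathlib

/-- ν(k, n, r): the coefficient of x^{n−k−1} y^{k−1} in (x+y)^r (x²+y²)^{(n−2−r)/2}. -/
noncomputable def nu (k n r : ℕ) : ℕ :=
  MvPolynomial.coeff (Finsupp.single 0 (n - k - 1) + Finsupp.single 1 (k - 1))
    (((MvPolynomial.X 0 + MvPolynomial.X 1) ^ r *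
      (MvPolynomial.X 0 ^ 2 + MvPolynomial.X 1 ^ 2) ^ ((n - 2 - r) / 2) :
        MvPolynomial (Fin 2) ℕ))

/-- C(N; a, b): 0 unless a + b = N, else N!/(a! b!). -/
def floorMultinomial (N a b : ℕ) : ℕ := if a + b = N then N.choose a else 0

open MvPolynomial

namespace NuAux

noncomputable abbrev d2 (a b : ℕ) : Fin 2 →₀ ℕ :=
  Finsupp.single 0 a + Finsupp.single 1 b

lemma d2_inj {a b a' b' : ℕ} (h : d2 a b = d2 a' b') : a = a' ∧ b = b' := by
  have h0 := DFunLike.congr_fun h (0 : Fin 2)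
  have h1 := DFunLike.congr_fun h (1 : Fin 2)
  simp [Finsupp.single_apply, Fin.ext_iff] at h0 h1
  exact ⟨h0, h1⟩

lemma coeff_cpow (c N a b : ℕ) (hc : 0 < c) :
    coeff (d2 a b) ((X 0 ^ c + X 1 ^ c : MvPolynomial (Fin 2) ℕ) ^ N) =
      if c ∣ a ∧ a + b = c * N then N.choose (a / c) else 0 := by
  rw [add_pow]
  have hterm : ∀ i, ((X 0 ^ c : MvPolynomial (Fin 2) ℕ)) ^ i * (X 1 ^ c) ^ (N - i)
      * (N.choose i : MvPolynomial (Fin 2) ℕ)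
      = monomial (d2 (c * i) (c * (N - i))) (N.choose i) := by
    intro i
    rw [← pow_mul, ← pow_mul, X_pow_eq_monomial, X_pow_eq_monomial,
      ← C_eq_coe_nat, C_apply, monomial_mul, monomial_mul, add_zero, one_mul, one_mul, Nat.cast_id]
  simp only [hterm, coeff_sum, coeff_monomial]
  by_cases h : c ∣ a ∧ a + b = c * N
  · rw [if_pos h]
    obtain ⟨hdvd, hab⟩ := h
    have hca : c * (a / c) = a := Nat.mul_div_cancel' hdvd
    have hle : a / c ≤ N := by
      have : a ≤ c * N := by omega
      calc a / c ≤ c * N / c := Nat.div_le_div_right this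
        _ = N := by rw [Nat.mul_div_cancel_left _ hc]
    have hb : c * (N - a / c) = b := by
      have h2 : c * ((a / c) + (N - a / c)) = c * (a / c) + c * (N - a / c) :=
        Nat.mul_add _ _ _
      have hs : a / c + (N - a / c) = N := by omega
      rw [hs] at h2
      omega
    rw [Finset.sum_eq_single (a / c)]
    · rw [if_pos (by rw [hca, hb])]
    · intro i hi hne
      rw [if_neg]
      intro heq
      obtain ⟨h1, h2⟩ := d2_inj heq
      have : a / c = i := by rw [← h1, Nat.mul_div_cancel_left _ hc]
      exact hne this.symm
    · intro hmem
      exact absurd (Finset.mem_range.2 (Nat.lt_succ_of_le hle)) hmem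
  · rw [if_neg h]
    apply Finset.sum_eq_zero
    intro i hi
    rw [if_neg]
    intro heq
    obtain ⟨h1, h2⟩ := d2_inj heq
    have hiN : i ≤ N := Nat.lt_succ_iff.mp (Finset.mem_range.mp hi)
    refine h ⟨⟨i, h1.symm⟩, ?_⟩
    have hm : c * (i + (N - i)) = c * i + c * (N - i) := Nat.mul_add c i (N - i)
    have hs : i + (N - i) = N := by omega
    rw [← h1, ← h2, ← hm, hs]

end NuAux

namespace NuAux

lemma coeff_mul_le {p p' q q' : MvPolynomial (Fin 2) ℕ}
    (h : ∀ d, coeff d p ≤ coeff d p') (h' : ∀ d, coeff d q ≤ coeff d q') :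
    ∀ d, coeff d (p * q) ≤ coeff d (p' * q') := by
  intro d
  rw [coeff_mul, coeff_mul]
  exact Finset.sum_le_sum fun x _ => Nat.mul_le_mul (h _) (h' _)

lemma coeff_pow_le {p p' : MvPolynomial (Fin 2) ℕ}
    (h : ∀ d, coeff d p ≤ coeff d p') (m : ℕ) :
    ∀ d, coeff d (p ^ m) ≤ coeff d (p' ^ m) := by
  induction m with
  | zero => intro d; simp
  | succ m ih =>
    rw [pow_succ, pow_succ]
    exact coeff_mul_le ih h

lemma sq_le :
    ∀ d, coeff d (X 0 ^ 2 + X 1 ^ 2 : MvPolynomial (Fin 2) ℕ) ≤ coeff d ((X 0 + X 1) ^ 2) := by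
  intro d
  have h : ((X 0 + X 1) ^ 2 : MvPolynomial (Fin 2) ℕ)
      = (X 0 ^ 2 + X 1 ^ 2) + 2 * (X 0 * X 1) := by ring
  rw [h, coeff_add]
  exact Nat.le_add_right _ _

lemma step (r0 t : ℕ) (s : ℕ) :
    ∀ d, coeff d (((X 0 + X 1) ^ r0 * (X 0 ^ 2 + X 1 ^ 2) ^ (t + s) : MvPolynomial (Fin 2) ℕ))
      ≤ coeff d (((X 0 + X 1) ^ (r0 + 2 * s) * (X 0 ^ 2 + X 1 ^ 2) ^ t : MvPolynomial (Fin 2) ℕ)) := by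
  induction s with
  | zero => intro d; simp
  | succ s ih =>
    intro d
    have e1 : ((X 0 + X 1) ^ r0 * (X 0 ^ 2 + X 1 ^ 2) ^ (t + (s + 1)) : MvPolynomial (Fin 2) ℕ)
        = ((X 0 + X 1) ^ r0 * (X 0 ^ 2 + X 1 ^ 2) ^ (t + s)) * (X 0 ^ 2 + X 1 ^ 2) := by
      rw [mul_assoc, ← pow_succ, ← add_assoc]
    have e2 : ((X 0 + X 1) ^ (r0 + 2 * (s + 1)) * (X 0 ^ 2 + X 1 ^ 2) ^ t : MvPolynomial (Fin 2) ℕ)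
        = ((X 0 + X 1) ^ (r0 + 2 * s) * (X 0 ^ 2 + X 1 ^ 2) ^ t) * (X 0 + X 1) ^ 2 := by
      rw [mul_right_comm, ← pow_add]
      ring_nf
    rw [e1, e2]
    exact coeff_mul_le ih sq_le d

end NuAux

namespace NuAux

lemma coeff_addpow (N a b : ℕ) :
    coeff (d2 a b) ((X 0 + X 1 : MvPolynomial (Fin 2) ℕ) ^ N) =
      if a + b = N then N.choose a else 0 := by
  have h := coeff_cpow 1 N a b one_pos
  rw [pow_one, pow_one] at h
  rw [h]
  simp [Nat.div_one]

lemma coeff_base (r0 m0 a b : ℕ) (hr0 : r0 ≤ 1) (ha : 1 ≤ a) (hb : 1 ≤ b)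
    (hsum : a + b = r0 + 2 * m0) :
    (if b / 2 + a / 2 = m0 then m0.choose (b / 2) else 0)
      ≤ coeff (d2 a b)
        (((X 0 + X 1) ^ r0 * (X 0 ^ 2 + X 1 ^ 2) ^ m0 : MvPolynomial (Fin 2) ℕ)) := by
  interval_cases r0
  · rw [pow_zero, one_mul, coeff_cpow 2 m0 a b two_pos]
    by_cases hdvd : 2 ∣ a
    · rw [if_pos (show b / 2 + a / 2 = m0 by omega),
        if_pos (show 2 ∣ a ∧ a + b = 2 * m0 by omega)]
      have hb2 : b / 2 = m0 - a / 2 := by omega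
      rw [hb2, Nat.choose_symm (show a / 2 ≤ m0 by omega)]
    · rw [if_neg (show ¬(b / 2 + a / 2 = m0) by omega)]
      exact Nat.zero_le _
  · rw [pow_one, add_mul, coeff_add]
    have e0 : d2 a b = Finsupp.single 0 1 + d2 (a - 1) b := by
      ext i; fin_cases i <;> simp [Finsupp.single_apply] <;> omega
    have e1 : d2 a b = Finsupp.single 1 1 + d2 a (b - 1) := by
      ext i; fin_cases i <;> simp [Finsupp.single_apply] <;> omega
    have c0 : coeff (d2 a b) (X 0 * (X 0 ^ 2 + X 1 ^ 2) ^ m0 : MvPolynomial (Fin 2) ℕ)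
        = coeff (d2 (a - 1) b) ((X 0 ^ 2 + X 1 ^ 2) ^ m0 : MvPolynomial (Fin 2) ℕ) := by
      rw [e0, coeff_X_mul]
    have c1 : coeff (d2 a b) (X 1 * (X 0 ^ 2 + X 1 ^ 2) ^ m0 : MvPolynomial (Fin 2) ℕ)
        = coeff (d2 a (b - 1)) ((X 0 ^ 2 + X 1 ^ 2) ^ m0 : MvPolynomial (Fin 2) ℕ) := by
      rw [e1, coeff_X_mul]
    rw [c0, c1, coeff_cpow 2 m0 (a - 1) b two_pos, coeff_cpow 2 m0 a (b - 1) two_pos]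
    by_cases hdvd : 2 ∣ a
    · rw [if_pos (show b / 2 + a / 2 = m0 by omega),
        if_neg (show ¬(2 ∣ (a - 1) ∧ (a - 1) + b = 2 * m0) by omega),
        if_pos (show 2 ∣ a ∧ a + (b - 1) = 2 * m0 by omega), zero_add]
      have hb2 : b / 2 = m0 - a / 2 := by omega
      rw [hb2, Nat.choose_symm (show a / 2 ≤ m0 by omega)]
    · rw [if_pos (show b / 2 + a / 2 = m0 by omega),
        if_pos (show 2 ∣ (a - 1) ∧ (a - 1) + b = 2 * m0 by omega),
        if_neg (show ¬(2 ∣ a ∧ a + (b - 1) = 2 * m0) by omega), add_zero]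
      have hb2 : b / 2 = m0 - (a - 1) / 2 := by omega
      rw [hb2, Nat.choose_symm (show (a - 1) / 2 ≤ m0 by omega)]

end NuAux

/-- Bounds on ν: C(⌊(n−2)/2⌋; ⌊(k−1)/2⌋, ⌊(n−k−1)/2⌋) ≤ ν(k,n,r) ≤ C(n−2, k−1)
for all admissible r. -/
theorem nu_bounds (k n r : ℕ) (hk : 2 ≤ k) (hn : k + 2 ≤ n)
    (hr : r ≤ n - 2) (hpar : r % 2 = n % 2) :
    floorMultinomial ((n - 2) / 2) ((k - 1) / 2) ((n - k - 1) / 2) ≤ nu k n r ∧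
      nu k n r ≤ Nat.choose (n - 2) (k - 1) := by
  have ha : 1 ≤ n - k - 1 := by omega
  have hb : 1 ≤ k - 1 := by omega
  have hab : (n - k - 1) + (k - 1) = n - 2 := by omega
  have heven : (n - 2 - r) % 2 = 0 := by omega
  set a := n - k - 1 with hadef
  set b := k - 1 with hbdef
  set m := (n - 2 - r) / 2 with hmdef
  have hm : r + 2 * m = n - 2 := by omega
  have hnu : nu k n r
      = MvPolynomial.coeff (NuAux.d2 a b)
        (((MvPolynomial.X 0 + MvPolynomial.X 1) ^ r *
          (MvPolynomial.X 0 ^ 2 + MvPolynomial.X 1 ^ 2) ^ m : MvPolynomial (Fin 2) ℕ)) := rfl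
  constructor
  · -- lower bound
    set r0 := n % 2 with hr0def
    set s := (r - r0) / 2 with hsdef
    have hrs : r = r0 + 2 * s := by omega
    have hm0 : a + b = r0 + 2 * (m + s) := by omega
    have h1 := NuAux.coeff_base r0 (m + s) a b (by omega) ha hb hm0 -- floor ≤ coeff at r0
    have h2 := NuAux.step r0 m s (NuAux.d2 a b)
    rw [← hrs] at h2
    have hfloor : floorMultinomial ((n - 2) / 2) ((k - 1) / 2) ((n - k - 1) / 2)
        = if b / 2 + a / 2 = m + s then (m + s).choose (b / 2) else 0 := by
      unfold floorMultinomial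
      have : (n - 2) / 2 = m + s := by omega
      rw [this]
    rw [hnu, hfloor]
    exact le_trans h1 h2
  · -- upper bound
    rw [hnu]
    calc MvPolynomial.coeff (NuAux.d2 a b)
          (((MvPolynomial.X 0 + MvPolynomial.X 1) ^ r *
            (MvPolynomial.X 0 ^ 2 + MvPolynomial.X 1 ^ 2) ^ m : MvPolynomial (Fin 2) ℕ))
        ≤ MvPolynomial.coeff (NuAux.d2 a b)
          (((MvPolynomial.X 0 + MvPolynomial.X 1) ^ r *
            ((MvPolynomial.X 0 + MvPolynomial.X 1) ^ 2) ^ m : MvPolynomial (Fin 2) ℕ)) :=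
          NuAux.coeff_mul_le (fun _ => le_refl _) (NuAux.coeff_pow_le NuAux.sq_le m) _
      _ = MvPolynomial.coeff (NuAux.d2 a b)
          ((MvPolynomial.X 0 + MvPolynomial.X 1) ^ (n - 2) : MvPolynomial (Fin 2) ℕ) := by
          rw [← pow_mul, ← pow_add, hm]
      _ = (n - 2).choose a := by rw [NuAux.coeff_addpow, if_pos hab]
      _ = (n - 2).choose b := by
          have : b = (n - 2) - a := by omega
          rw [this, Nat.choose_symm (by omega)]
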